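/- (Two-qutrit purity.) Let χ, t ∈ ℝ, let ψ : ZMod 3 × ZMod 3 → ℂ be the two-qutrit state vector ψ(m,n) = (1/3)·Complex.exp(−i χ t · m·n) (with m·n evaluated via the integer representatives in {0,1,2}), and let ρ₁ be the 3×3 reduced density matrix with entries (ρ₁)_{m,m'} = Σ_{n ∈ ZMod 3} ψ(m,n) · conj(ψ(m',n)). Then Tr(ρ₁²) = ( 27 + 4·(1 + 2·cos(χt))² + 2·(1 + 2·cos(2χt))² ) / 81. -/

import Mathlib

set_option maxHeartbeats 1000000

open Matrix Complex

noncomputable section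

lemma sumZ3 (f : ZMod 3 → ℂ) : ∑ n : ZMod 3, f n = f 0 + f 1 + f 2 := by
  show ∑ n : Fin 3, f n = _
  exact Fin.sum_univ_three f

theorem two_qutrit_purity
    (χ t : ℝ) (ψ : ZMod 3 → ZMod 3 → ℂ)
    (hψ : ∀ m n : ZMod 3,
      ψ m n = (1 / 3) * Complex.exp (-(Complex.I) * (χ : ℂ) * (t : ℂ) *
        ((m.val * n.val : ℕ) : ℂ)))
    (ρ₁ : Matrix (ZMod 3) (ZMod 3) ℂ)
    (hρ₁ : ∀ m m' : ZMod 3,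
      ρ₁ m m' = ∑ n : ZMod 3, ψ m n * (starRingEnd ℂ) (ψ m' n)) :
    Matrix.trace (ρ₁ * ρ₁) =
      (((27 + 4 * (1 + 2 * Real.cos (χ * t)) ^ 2 +
          2 * (1 + 2 * Real.cos (2 * (χ * t))) ^ 2) / 81 : ℝ) : ℂ) := by
  have v0 : (0 : ZMod 3).val = 0 := rfl
  have v1 : (1 : ZMod 3).val = 1 := rfl
  have v2 : (2 : ZMod 3).val = 2 := rfl
  rw [Matrix.trace]
  simp only [Matrix.diag_apply, Matrix.mul_apply, hρ₁, hψ, sumZ3, v0, v1, v2,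
    _root_.map_mul, map_div₀, _root_.map_one, map_ofNat, ← Complex.exp_conj, map_neg,
    Complex.conj_I, Complex.conj_ofReal, Complex.conj_natCast]
  norm_num
  set u := Complex.exp (Complex.I * (χ:ℂ) * (t:ℂ)) with hu
  have hu0 : u ≠ 0 := Complex.exp_ne_zero _
  have h2 : Complex.exp (Complex.I * (χ:ℂ) * (t:ℂ) * 2) = u ^ 2 := by
    rw [show Complex.I * (χ:ℂ) * (t:ℂ) * 2 = (2:ℕ) * (Complex.I * (χ:ℂ) * (t:ℂ)) by push_cast; ring,
      Complex.exp_nat_mul]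
  have h4 : Complex.exp (Complex.I * (χ:ℂ) * (t:ℂ) * 4) = u ^ 4 := by
    rw [show Complex.I * (χ:ℂ) * (t:ℂ) * 4 = (4:ℕ) * (Complex.I * (χ:ℂ) * (t:ℂ)) by push_cast; ring,
      Complex.exp_nat_mul]
  have hc1 : Complex.cos ((χ:ℂ) * (t:ℂ)) = (u + u⁻¹) / 2 := by
    rw [Complex.cos, show (χ:ℂ) * (t:ℂ) * Complex.I = Complex.I * (χ:ℂ) * (t:ℂ) by ring,
      show -((χ:ℂ) * (t:ℂ)) * Complex.I = -(Complex.I * (χ:ℂ) * (t:ℂ)) by ring,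
      Complex.exp_neg, ← hu]
  have hc2 : Complex.cos (2 * ((χ:ℂ) * (t:ℂ))) = (u ^ 2 + (u ^ 2)⁻¹) / 2 := by
    rw [Complex.cos, show 2 * ((χ:ℂ) * (t:ℂ)) * Complex.I = Complex.I * (χ:ℂ) * (t:ℂ) * 2 by ring,
      show -(2 * ((χ:ℂ) * (t:ℂ))) * Complex.I = -(Complex.I * (χ:ℂ) * (t:ℂ) * 2) by ring,
      Complex.exp_neg, h2]
  clear_value u
  simp only [Complex.exp_neg, h2, h4, ← hu, hc1, hc2, ← inv_pow]
  set v := u⁻¹ with hv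
  have huv : u * v = 1 := mul_inv_cancel₀ hu0
  linear_combination ((16/81 : ℂ) + (2/27 : ℂ) * v + (4/81 : ℂ) * v^2 + (2/27 : ℂ) * u +
    (20/81 : ℂ) * u * v + (2/81 : ℂ) * u * v^2 + (4/81 : ℂ) * u * v^3 + (4/81 : ℂ) * u^2 +
    (2/81 : ℂ) * u^2 * v + (5/27 : ℂ) * u^2 * v^2 + (2/81 : ℂ) * u^2 * v^3 +
    (4/81 : ℂ) * u^3 * v + (2/81 : ℂ) * u^3 * v^2 + (11/81 : ℂ) * u^3 * v^3 +
    (2/81 : ℂ) * u^3 * v^4 + (2/81 : ℂ) * u^4 * v^3 + (5/81 : ℂ) * u^4 * v^4 +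
    (5/81 : ℂ) * u^5 * v^5 + (1/81 : ℂ) * u^6 * v^6 + (1/81 : ℂ) * u^7 * v^7) * huv
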